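/- Let E be a real normed vector space, f : E →L[ℝ] ℝ a continuous linear functional, x, x' ∈ E and ε a real number with ε ≥ 0. Then the supremum of the targeted attack losses toward target x' equals |f x − f x'| + ε * ‖f‖: sSup { |f (x + δ) − f x'| : δ ∈ E, ‖δ‖ ≤ ε } = |f x − f x'| + ε * ‖f‖. -/

import Mathlib

lemma abs_add_abs_le_max (a b : ℝ) : |a| + |b| ≤ max (|a + b|) (|a - b|) := by
  rcases le_total 0 b with hb | hb
  · rcases le_total 0 a with ha | ha
    · exact le_max_of_le_left (by rw [abs_of_nonneg ha, abs_of_nonneg hb,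
        abs_of_nonneg (by linarith)] <;>
        try linarith)
    · exact le_max_of_le_right (by rw [abs_of_nonpos ha, abs_of_nonneg hb,
        abs_of_nonpos (by linarith)] <;>
        try linarith)
  · rcases le_total 0 a with ha | ha
    · exact le_max_of_le_right (by rw [abs_of_nonneg ha, abs_of_nonpos hb,
        abs_of_nonneg (by linarith)] <;>
        try linarith)
    · exact le_max_of_le_left (by rw [abs_of_nonpos ha, abs_of_nonpos hb,
        abs_of_nonpos (by linarith)] <;>
        try linarith)

theorem targeted_attack_sup (E : Type*) [NormedAddCommGroup E] [NormedSpace ℝ E]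
    (f : E →L[ℝ] ℝ) (x x' : E) (ε : ℝ) (hε : 0 ≤ ε) :
    sSup {y : ℝ | ∃ δ : E, ‖δ‖ ≤ ε ∧ y = |f (x + δ) - f x'|} = |f x - f x'| + ε * ‖f‖ := by
  set c : ℝ := f x - f x' with hc
  set S := {y : ℝ | ∃ δ : E, ‖δ‖ ≤ ε ∧ y = |f (x + δ) - f x'|} with hS
  have hmem : ∀ δ : E, ‖δ‖ ≤ ε → |c + f δ| ∈ S := fun δ hδ =>
    ⟨δ, hδ, by rw [map_add, hc]; ring_nf⟩
  have hne : S.Nonempty := ⟨|c|, by simpa using hmem 0 (by simpa using hε)⟩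
  have hub : ∀ y ∈ S, y ≤ |c| + ε * ‖f‖ := by
    rintro y ⟨δ, hδ, rfl⟩
    have h1 : |f δ| ≤ ε * ‖f‖ := by
      have := f.le_opNorm δ
      rw [Real.norm_eq_abs] at this
      nlinarith [norm_nonneg f, norm_nonneg δ, abs_nonneg (f δ)]
    calc |f (x + δ) - f x'| = |c + f δ| := by rw [map_add, hc]; ring_nf
      _ ≤ |c| + |f δ| := abs_add_le _ _
      _ ≤ |c| + ε * ‖f‖ := by linarith
  have hbdd : BddAbove S := ⟨|c| + ε * ‖f‖, hub⟩
  refine le_antisymm (csSup_le hne hub) ?_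
  rcases eq_or_lt_of_le hε with hε0 | hε0
  · rw [← hε0]
    simpa using le_csSup hbdd (hmem 0 (by simpa using hε))
  refine le_of_forall_lt fun w hw => ?_
  rcases lt_or_ge w |c| with hwc | hwc
  · exact lt_of_lt_of_le hwc (le_csSup hbdd (by simpa using hmem 0 (by simpa using hε)))
  · have hr : (w - |c|) / ε < ‖f‖ := by
      rw [div_lt_iff₀ hε0]
      nlinarith
    obtain ⟨v, hv1, hv2⟩ := f.exists_lt_apply_of_lt_opNorm hr
    rw [Real.norm_eq_abs] at hv2
    have hδ : ‖ε • v‖ ≤ ε := by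
      rw [norm_smul, Real.norm_eq_abs, abs_of_nonneg hε]
      nlinarith
    have hfδ : |f (ε • v)| = ε * |f v| := by
      rw [map_smul, smul_eq_mul, abs_mul, abs_of_nonneg hε]
    have h1 : |c + f (ε • v)| ∈ S := hmem _ hδ
    have h2 : |c - f (ε • v)| ∈ S := by
      have := hmem (-(ε • v)) (by simpa using hδ)
      simpa [sub_eq_add_neg] using this
    have hkey : w < |c| + |f (ε • v)| := by
      rw [hfδ]
      have h3 : w - |c| < |f v| * ε := (div_lt_iff₀ hε0).mp hv2
      nlinarith
    have := abs_add_abs_le_max c (f (ε • v))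
    rcases le_max_iff.mp this with h | h
    · exact lt_of_lt_of_le (lt_of_lt_of_le hkey h) (le_csSup hbdd h1)
    · exact lt_of_lt_of_le (lt_of_lt_of_le hkey h) (le_csSup hbdd h2)
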